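/- Let a, b be selfadjoint n×n complex matrices. The function t ↦ dim ker(b - t·a) on ℝ attains its minimum value outside a finite subset of ℝ; i.e., there is a finite set F ⊂ ℝ such that dim ker(b - t·a) = min_{s∈ℝ} dim ker(b - s·a) for all t ∉ F. -/

import Mathlib

open Matrix Module Polynomial

private lemma rank_submatrix_le' {n r : ℕ} (M : Matrix (Fin n) (Fin n) ℂ)
    (f g : Fin r → Fin n) : (M.submatrix f g).rank ≤ M.rank := by
  have h : M.submatrix f g =
      ((1 : Matrix (Fin n) (Fin n) ℂ).submatrix f id) *
        (M * ((1 : Matrix (Fin n) (Fin n) ℂ).submatrix id g)) := by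
    ext i j
    simp [Matrix.mul_apply, Matrix.one_apply]
  rw [h]
  exact le_trans (Matrix.rank_mul_le_right _ _) (Matrix.rank_mul_le_left _ _)

private lemma rank_ge_of_minor {n r : ℕ} (M : Matrix (Fin n) (Fin n) ℂ)
    (f g : Fin r → Fin n) (h : (M.submatrix f g).det ≠ 0) : r ≤ M.rank := by
  have hu : IsUnit (M.submatrix f g) :=
    (Matrix.isUnit_iff_isUnit_det _).mpr (isUnit_iff_ne_zero.mpr h)
  have h2 := Matrix.rank_of_isUnit _ hu
  calc r = (M.submatrix f g).rank := by rw [h2, Fintype.card_fin]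
    _ ≤ M.rank := rank_submatrix_le' M f g

private lemma extract_li {m : ℕ} {ι : Type*} [Fintype ι] (v : ι → (Fin m → ℂ)) (r : ℕ)
    (hr : finrank ℂ (Submodule.span ℂ (Set.range v)) = r) :
    ∃ g : Fin r → ι, LinearIndependent ℂ (v ∘ g) := by
  obtain ⟨s, hs, hspan, hli⟩ := exists_linearIndependent ℂ (Set.range v)
  have hsfin : s.Finite := (Set.finite_range v).subset hs
  haveI := hsfin.fintype
  have hcard : s.toFinset.card = r := by
    rw [← finrank_span_set_eq_card hli, hspan, hr]
  let e : Fin r ≃ s.toFinset := (Finset.equivFinOfCardEq hcard).symm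
  have hmem : ∀ i : Fin r, ((e i : Fin m → ℂ)) ∈ s := fun i =>
    Set.mem_toFinset.mp (e i).2
  choose idx hidx using fun i : Fin r => hs (hmem i)
  refine ⟨idx, ?_⟩
  have heq : v ∘ idx = fun i : Fin r => ((⟨e i, hmem i⟩ : s) : Fin m → ℂ) := by
    funext i; simp [Function.comp, hidx i]
  rw [heq]
  exact hli.comp (fun i : Fin r => (⟨e i, hmem i⟩ : s))
    (fun i j hij => by
      have hval : ((e i : Fin m → ℂ)) = (e j : Fin m → ℂ) :=
        congrArg (Subtype.val : s → (Fin m → ℂ)) hij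
      exact e.injective (Subtype.ext hval))

private lemma exists_minor {n : ℕ} (M : Matrix (Fin n) (Fin n) ℂ) :
    ∃ f g : Fin M.rank → Fin n, (M.submatrix f g).det ≠ 0 := by
  set r := M.rank with hrdef
  obtain ⟨g, hg⟩ := extract_li (fun j => Mᵀ j) r (by
    rw [hrdef, Matrix.rank_eq_finrank_span_cols]; rfl)
  set N : Matrix (Fin n) (Fin r) ℂ := M.submatrix id g with hN
  have hNT : (fun j => Nᵀ j) = (fun j => Mᵀ j) ∘ g := by
    funext j; ext i; rfl
  have hrankN : N.rank = r := by
    rw [Matrix.rank_eq_finrank_span_cols]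
    have h3 : Set.range Nᵀ = Set.range ((fun j => Mᵀ j) ∘ g) := by
      rw [← hNT]
    rw [show Set.range N.col = Set.range Nᵀ from rfl, h3, finrank_span_eq_card hg, Fintype.card_fin]
  have hrankNT : Nᵀ.rank = r := by rw [Matrix.rank_transpose, hrankN]
  rw [Matrix.rank_eq_finrank_span_cols] at hrankNT
  obtain ⟨f, hf⟩ := extract_li (fun i => N i) r hrankNT
  refine ⟨f, g, ?_⟩
  have hrows : (fun i => (M.submatrix f g) i) = (fun i => N i) ∘ f := by
    funext i; ext j; rfl
  have hu : IsUnit (M.submatrix f g) := by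
    rw [← Matrix.linearIndependent_rows_iff_isUnit, show (M.submatrix f g).row = fun i => (M.submatrix f g) i from rfl, hrows]
    exact hf
  exact isUnit_iff_ne_zero.mp ((Matrix.isUnit_iff_isUnit_det _).mp hu)

private lemma ker_finrank_eq {n : ℕ} (M : Matrix (Fin n) (Fin n) ℂ) :
    M.rank + finrank ℂ (LinearMap.ker (Matrix.toLin' M)) = n := by
  have h1 : Matrix.toLin' M = M.mulVecLin := by
    ext v; simp [Matrix.toLin'_apply, Matrix.mulVecLin_apply]
  rw [h1, Matrix.rank]
  have h2 := LinearMap.finrank_range_add_finrank_ker M.mulVecLin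
  rw [h2]
  simp

/-- For selfadjoint `a, b ∈ Mₙ(ℂ)`, the function `t ↦ dim ker(b - t·a)` attains its
minimum value outside a finite subset of `ℝ`. -/
theorem stmt_12 (n : ℕ) (a b : Matrix (Fin n) (Fin n) ℂ)
    (ha : a.IsHermitian) (hb : b.IsHermitian) :
    ∃ F : Finset ℝ, ∀ t : ℝ, t ∉ F →
      Module.finrank ℂ (LinearMap.ker (Matrix.toLin' (b - (t : ℂ) • a))) =
        ⨅ s : ℝ, Module.finrank ℂ (LinearMap.ker (Matrix.toLin' (b - (s : ℂ) • a))) := by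
  classical
  set k : ℝ → ℕ := fun t => finrank ℂ (LinearMap.ker (Matrix.toLin' (b - (t : ℂ) • a))) with hk
  have hinf : ∃ s₀ : ℝ, k s₀ = ⨅ s : ℝ, k s := by
    have h : (⨅ s : ℝ, k s) ∈ Set.range k := by
      rw [iInf]
      exact Nat.sInf_mem (Set.range_nonempty k)
    obtain ⟨s₀, hs₀⟩ := h
    exact ⟨s₀, hs₀⟩
  obtain ⟨s₀, hs₀⟩ := hinf
  set M₀ : Matrix (Fin n) (Fin n) ℂ := b - (s₀ : ℂ) • a with hM₀
  obtain ⟨f, g, hdet⟩ := exists_minor M₀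
  set Mpoly : Matrix (Fin M₀.rank) (Fin M₀.rank) ℂ[X] :=
    Matrix.of (fun i j : Fin M₀.rank => Polynomial.C (b (f i) (g j)) -
      Polynomial.X * Polynomial.C (a (f i) (g j))) with hMpoly
  set p : Polynomial ℂ := Mpoly.det with hp
  have hmap : ∀ t : ℂ, (Mpoly.map (Polynomial.eval t)) = (b - t • a).submatrix f g := by
    intro t
    ext i j
    simp [hMpoly, Matrix.sub_apply, Matrix.smul_apply]
    ring
  have heval : ∀ t : ℂ, p.eval t = ((b - t • a).submatrix f g).det := by
    intro t
    have h1 := RingHom.map_det (Polynomial.evalRingHom t) Mpoly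
    rw [RingHom.mapMatrix_apply, Polynomial.coe_evalRingHom, hmap t] at h1
    exact h1
  have hp0 : p ≠ 0 := by
    intro h
    apply hdet
    have h3 := heval (s₀ : ℂ)
    rw [h] at h3
    simpa [hM₀] using h3.symm
  refine ⟨p.roots.toFinset.image Complex.re, fun t ht => ?_⟩
  have hpt : p.eval (t : ℂ) ≠ 0 := by
    intro h
    exact ht (Finset.mem_image.mpr ⟨(t : ℂ),
      Multiset.mem_toFinset.mpr ((Polynomial.mem_roots hp0).mpr h), rfl⟩)
  have hrank_ge : M₀.rank ≤ (b - (t : ℂ) • a).rank := by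
    apply rank_ge_of_minor _ f g
    rw [← heval]
    exact hpt
  have h1 := ker_finrank_eq (b - (t : ℂ) • a)
  have h2 := ker_finrank_eq M₀
  have hle : (⨅ s : ℝ, k s) ≤ k t := ciInf_le (by
    refine ⟨0, fun x hx => ?_⟩
    obtain ⟨s, rfl⟩ := hx
    exact Nat.zero_le _) t
  have hkt : k t = finrank ℂ (LinearMap.ker (Matrix.toLin' (b - (t : ℂ) • a))) := rfl
  have hks : k s₀ = finrank ℂ (LinearMap.ker (Matrix.toLin' M₀)) := rfl
  show k t = ⨅ s : ℝ, k s
  rw [← hs₀]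
  omega
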